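/- Let N be a finite set of points in a compact set K ⊂ ℝ, partitioned into N₀, …, N_{s−1}. Then the Lebesgue constant satisfies Δ(N) ≤ Σ_{i=0}^{s−1} (max_{x∈K, a∈N_i} |w_{N∖N_i}(x)| / |w_{N∖N_i}(a)|) · Δ(N_i), where Δ(A) = max_{x∈K} Σ_{a∈A} |ℓ(A,a;x)|. -/
import Mathlib


open Finset

/-- The nodal function of a finite node set. -/
noncomputable def nodal (A : Finset ℝ) (x : ℝ) : ℝ := ∏ b ∈ A, (x - b)

/-- The fundamental Lagrange interpolation polynomial (as a function) at node `a`. -/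
noncomputable def lagBasis (A : Finset ℝ) (a : ℝ) (x : ℝ) : ℝ := ∏ b ∈ A.erase a, (x - b) / (a - b)

/-- The Lebesgue constant of the node set `A` with respect to the compact set `K`. -/
noncomputable def leb (A : Finset ℝ) (K : Set ℝ) : ℝ :=
  ⨆ x ∈ K, ∑ a ∈ A, |lagBasis A a x|

lemma le_iSup_prop {p : ℝ → Prop} {f : ℝ → ℝ} {C : ℝ} (hf : ∀ y, p y → f y ≤ C)
    {x : ℝ} (hx : p x) : f x ≤ ⨆ y, ⨆ _ : p y, f y := by
  have hb : BddAbove (Set.range fun y => ⨆ _ : p y, f y) := by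
    refine ⟨max C 0, ?_⟩
    rintro _ ⟨y, rfl⟩
    exact Real.iSup_le (fun h => (hf y h).trans (le_max_left _ _)) (le_max_right _ _)
  have h1 : f x ≤ ⨆ _ : p x, f x :=
    le_ciSup (f := fun _ : p x => f x) ⟨f x, by rintro _ ⟨h, rfl⟩; exact le_rfl⟩ hx
  exact h1.trans (le_ciSup hb x)

lemma iSup_prop_nonneg {p : ℝ → Prop} {f : ℝ → ℝ} (hf : ∀ y, 0 ≤ f y) :
    0 ≤ ⨆ y, ⨆ _ : p y, f y :=
  Real.iSup_nonneg fun y => Real.iSup_nonneg fun _ => hf y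

lemma lagBasis_factor {N Q : Finset ℝ} (hQN : Q ⊆ N) {a : ℝ} (ha : a ∈ Q) (x : ℝ) :
    lagBasis N a x = lagBasis Q a x * (nodal (N \ Q) x / nodal (N \ Q) a) := by
  have hNa : N.erase a = Q.erase a ∪ (N \ Q) := by
    have hN : Q ∪ N \ Q = N := Finset.union_sdiff_of_subset hQN
    have haA : a ∉ N \ Q := fun h => (Finset.mem_sdiff.mp h).2 ha
    conv_lhs => rw [← hN]
    rw [Finset.erase_union_distrib, Finset.erase_eq_of_notMem haA]
  have hd : Disjoint (Q.erase a) (N \ Q) :=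
    Finset.disjoint_sdiff.mono_left (Finset.erase_subset _ _)
  rw [lagBasis, hNa, Finset.prod_union hd, lagBasis, nodal, nodal,
    ← Finset.prod_div_distrib]

theorem lebesgue_constant_partition_bound (K : Set ℝ) (hK : IsCompact K)
    (N : Finset ℝ) (hNK : (N : Set ℝ) ⊆ K) (s : ℕ) (P : ℕ → Finset ℝ)
    (hcover : N = (Finset.range s).biUnion P)
    (hdisj : ∀ i j, i < s → j < s → i ≠ j → Disjoint (P i) (P j)) :
    leb N K ≤ ∑ i ∈ Finset.range s,
      (⨆ x ∈ K, ⨆ a ∈ P i, |nodal (N \ P i) x| / |nodal (N \ P i) a|) *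
        leb (P i) K := by
  have hPD : (↑(Finset.range s) : Set ℕ).PairwiseDisjoint P := by
    intro i hi j hj hij
    exact hdisj i j (Finset.mem_range.mp (Finset.mem_coe.mp hi))
      (Finset.mem_range.mp (Finset.mem_coe.mp hj)) hij
  have hlebnn : ∀ Q : Finset ℝ, 0 ≤ leb Q K := fun Q =>
    iSup_prop_nonneg fun y => Finset.sum_nonneg fun a _ => abs_nonneg _
  set M : ℕ → ℝ := fun i =>
    ⨆ x ∈ K, ⨆ a ∈ P i, |nodal (N \ P i) x| / |nodal (N \ P i) a| with hM
  have hMnn : ∀ i, 0 ≤ M i := fun i =>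
    iSup_prop_nonneg fun y => iSup_prop_nonneg fun a => div_nonneg (abs_nonneg _) (abs_nonneg _)
  have hRHSnn : 0 ≤ ∑ i ∈ Finset.range s, M i * leb (P i) K :=
    Finset.sum_nonneg fun i _ => mul_nonneg (hMnn i) (hlebnn _)
  rw [leb]
  refine Real.iSup_le (fun x => Real.iSup_le (fun hx => ?_) hRHSnn) hRHSnn
  have hsplit : ∑ a ∈ N, |lagBasis N a x| = ∑ i ∈ Finset.range s, ∑ a ∈ P i, |lagBasis N a x| := by
    rw [← Finset.sum_biUnion hPD, ← hcover]
  rw [hsplit]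
  refine Finset.sum_le_sum fun i hi => ?_
  have hQN : P i ⊆ N := by rw [hcover]; exact Finset.subset_biUnion_of_mem P hi
  set Q := P i with hQ
  -- bound for the ratio sums on K
  obtain ⟨C2, hC2⟩ : ∃ C, ∀ y ∈ K, (∑ a ∈ Q, |nodal (N \ Q) y| / |nodal (N \ Q) a|) ≤ C := by
    have hcont : Continuous fun y => ∑ a ∈ Q, |nodal (N \ Q) y| / |nodal (N \ Q) a| := by
      simp only [nodal]
      exact continuous_finset_sum _ fun a _ =>
        ((continuous_finset_prod _ fun b _ => continuous_id.sub continuous_const).abs).div_const _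
    obtain ⟨C, hC⟩ := hK.exists_bound_of_continuousOn hcont.continuousOn
    refine ⟨C, fun y hy => ?_⟩
    have := hC y hy
    rw [Real.norm_eq_abs] at this
    exact (le_abs_self _).trans this
  have hratio : ∀ a ∈ Q, |nodal (N \ Q) x| / |nodal (N \ Q) a| ≤ M i := by
    intro a haQ
    have h1 : |nodal (N \ Q) x| / |nodal (N \ Q) a|
        ≤ ⨆ a' ∈ Q, |nodal (N \ Q) x| / |nodal (N \ Q) a'| :=
      le_iSup_prop (f := fun a' => |nodal (N \ Q) x| / |nodal (N \ Q) a'|) (p := (· ∈ Q))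
        (C := ∑ a' ∈ Q, |nodal (N \ Q) x| / |nodal (N \ Q) a'|)
        (fun a' ha' => Finset.single_le_sum
          (f := fun a' => |nodal (N \ Q) x| / |nodal (N \ Q) a'|)
          (fun b _ => div_nonneg (abs_nonneg _) (abs_nonneg _)) ha') haQ
    refine h1.trans ?_
    exact le_iSup_prop (f := fun y => ⨆ a' ∈ Q, |nodal (N \ Q) y| / |nodal (N \ Q) a'|)
      (p := (· ∈ K)) (C := max C2 0)
      (fun y hy => Real.iSup_le (fun a' => Real.iSup_le
        (fun ha' => (Finset.single_le_sum
          (fun b _ => div_nonneg (abs_nonneg _) (abs_nonneg _)) ha').trans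
          ((hC2 y hy).trans (le_max_left _ _)))
        (le_max_right _ _)) (le_max_right _ _)) hx
  -- bound for the partial Lebesgue sum
  obtain ⟨C1, hC1⟩ : ∃ C, ∀ y ∈ K, (∑ a ∈ Q, |lagBasis Q a y|) ≤ C := by
    have hcont : Continuous fun y => ∑ a ∈ Q, |lagBasis Q a y| := by
      simp only [lagBasis]
      exact continuous_finset_sum _ fun a _ =>
        (continuous_finset_prod _ fun b _ =>
          (continuous_id.sub continuous_const).div_const _).abs
    obtain ⟨C, hC⟩ := hK.exists_bound_of_continuousOn hcont.continuousOn
    refine ⟨C, fun y hy => ?_⟩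
    have := hC y hy
    rw [Real.norm_eq_abs] at this
    exact (le_abs_self _).trans this
  have hS : (∑ a ∈ Q, |lagBasis Q a x|) ≤ leb Q K := by
    rw [leb]; exact le_iSup_prop hC1 hx
  calc ∑ a ∈ Q, |lagBasis N a x|
      = ∑ a ∈ Q, |lagBasis Q a x| * (|nodal (N \ Q) x| / |nodal (N \ Q) a|) := by
        refine Finset.sum_congr rfl fun a ha => ?_
        rw [lagBasis_factor hQN ha, abs_mul, abs_div]
    _ ≤ ∑ a ∈ Q, |lagBasis Q a x| * M i :=
        Finset.sum_le_sum fun a ha => mul_le_mul_of_nonneg_left (hratio a ha) (abs_nonneg _)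
    _ = (∑ a ∈ Q, |lagBasis Q a x|) * M i := (Finset.sum_mul _ _ _).symm
    _ ≤ leb Q K * M i := mul_le_mul_of_nonneg_right hS (hMnn i)
    _ = M i * leb Q K := mul_comm _ _
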